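/- Dowker duality for 0-dimensional homology at a fixed parameter: the Dowker complexes D_{U,V}^ε and D_{V,U}^ε have the same number of connected components, provided both are nonempty. Equivalently, the bipartite relation R_ε = {(u,v) : d(u,v) ≤ ε} induces a bijection between the connected components of D_{U,V}^ε and those of D_{V,U}^ε. -/
import Mathlib


/-- The 1-skeleton of the Dowker complex `D_{U,V}^ε`: its vertices are the
points of `U` admitting an `ε`-witness in `V`, and two vertices are adjacent
iff some `v ∈ V` is within `ε` of both. -/
def dowkerGraph {X : Type*} [MetricSpace X] (U V : Finset X) (ε : ℝ) :
    SimpleGraph {u : X // u ∈ U ∧ ∃ v ∈ V, dist u v ≤ ε} :=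
  SimpleGraph.fromRel (fun a b => ∃ v ∈ V, dist a.1 v ≤ ε ∧ dist b.1 v ≤ ε)

namespace DowkerAux

variable {X : Type*} [MetricSpace X] (U V : Finset X) (ε : ℝ)

/-- pick a witness in `V` for a vertex of `dowkerGraph U V ε`, viewed as a
vertex of `dowkerGraph V U ε`. -/
noncomputable def wit (u : {u : X // u ∈ U ∧ ∃ v ∈ V, dist u v ≤ ε}) :
    {v : X // v ∈ V ∧ ∃ u ∈ U, dist v u ≤ ε} :=
  ⟨u.2.2.choose, u.2.2.choose_spec.1, u.1, u.2.1,
    by rw [dist_comm]; exact u.2.2.choose_spec.2⟩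

lemma wit_dist (u : {u : X // u ∈ U ∧ ∃ v ∈ V, dist u v ≤ ε}) :
    dist u.1 (wit U V ε u).1 ≤ ε := u.2.2.choose_spec.2

lemma reach_of_common {a b : {u : X // u ∈ U ∧ ∃ v ∈ V, dist u v ≤ ε}}
    (h : ∃ v ∈ V, dist a.1 v ≤ ε ∧ dist b.1 v ≤ ε) :
    (dowkerGraph U V ε).Reachable a b := by
  rcases eq_or_ne a b with rfl | hne
  · exact SimpleGraph.Reachable.refl a
  · exact SimpleGraph.Adj.reachable (by
      rw [dowkerGraph, SimpleGraph.fromRel_adj]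
      exact ⟨hne, Or.inl h⟩)

lemma wits_eq {a b : {u : X // u ∈ U ∧ ∃ v ∈ V, dist u v ≤ ε}}
    (p : (dowkerGraph U V ε).Walk a b) :
    SimpleGraph.connectedComponentMk (dowkerGraph V U ε) (wit U V ε a) =
      SimpleGraph.connectedComponentMk (dowkerGraph V U ε) (wit U V ε b) := by
  induction p with
  | nil => rfl
  | cons h p ih =>
      refine Eq.trans ?_ ih
      apply SimpleGraph.ConnectedComponent.sound
      rename_i a c _
      rw [dowkerGraph, SimpleGraph.fromRel_adj] at h
      obtain ⟨-, h⟩ := h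
      have : ∃ v ∈ V, dist a.1 v ≤ ε ∧ dist c.1 v ≤ ε := by tauto
      obtain ⟨v, hvV, hav, hbv⟩ := this
      have hv : v ∈ V ∧ ∃ u ∈ U, dist v u ≤ ε :=
        ⟨hvV, a.1, a.2.1, by rw [dist_comm]; exact hav⟩
      refine SimpleGraph.Reachable.trans
        (reach_of_common V U ε (a := wit U V ε a) (b := ⟨v, hv⟩)
          ⟨a.1, a.2.1, by rw [dist_comm]; exact wit_dist U V ε a,
            by rw [dist_comm]; exact hav⟩)
        (reach_of_common V U ε (a := ⟨v, hv⟩) (b := wit U V ε c)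
          ⟨c.1, c.2.1, by rw [dist_comm]; exact hbv,
            by rw [dist_comm]; exact wit_dist U V ε c⟩)

/-- the induced map on connected components -/
noncomputable def F : (dowkerGraph U V ε).ConnectedComponent →
    (dowkerGraph V U ε).ConnectedComponent :=
  SimpleGraph.ConnectedComponent.lift
    (fun u => SimpleGraph.connectedComponentMk _ (wit U V ε u))
    (fun _ _ p _ => wits_eq U V ε p)

lemma F_F (c : (dowkerGraph U V ε).ConnectedComponent) :
    F V U ε (F U V ε c) = c := by
  induction c using SimpleGraph.ConnectedComponent.ind with
  | _ a =>
    show SimpleGraph.connectedComponentMk _ (wit V U ε (wit U V ε a)) =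
      SimpleGraph.connectedComponentMk _ a
    apply SimpleGraph.ConnectedComponent.sound
    exact reach_of_common U V ε
      ⟨(wit U V ε a).1, (wit U V ε a).2.1,
        by rw [dist_comm]; exact wit_dist V U ε (wit U V ε a), wit_dist U V ε a⟩

end DowkerAux

/-- Dowker duality for 0-dimensional homology at a fixed parameter: if both
`D_{U,V}^ε` and `D_{V,U}^ε` are nonempty, they have the same number of
connected components. -/
theorem dowker_duality_connectedComponents {X : Type*} [MetricSpace X]
    (U V : Finset X) (ε : ℝ)
    (hUV : ∃ u ∈ U, ∃ v ∈ V, dist u v ≤ ε)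
    (hVU : ∃ v ∈ V, ∃ u ∈ U, dist v u ≤ ε) :
    Nat.card (dowkerGraph U V ε).ConnectedComponent =
      Nat.card (dowkerGraph V U ε).ConnectedComponent := by
  exact Nat.card_congr
    ⟨DowkerAux.F U V ε, DowkerAux.F V U ε,
      DowkerAux.F_F U V ε, DowkerAux.F_F V U ε⟩
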